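/- For each integer k ≥ 3, the limit as B → 0⁺ of h(B)/(2B²) equals 1/(2(k-1)(k-2)), where h(B) = ∫_0^1 ψ_k(B/√x) dx and ψ_k(y) = P(Po(y) ≥ k). -/

import Mathlib

open MeasureTheory Filter

/-- `psi m x` is the probability that a Poisson random variable with mean `x`
takes a value at least `m`. -/
noncomputable def psi (m : ℕ) (x : ℝ) : ℝ :=
  ∑' t : ℕ, if m ≤ t then x ^ t * Real.exp (-x) / t.factorial else 0

/-- `h k B = ∫_0^1 ψ_k(B/√x) dx`. -/
noncomputable def hFun (k : ℕ) (B : ℝ) : ℝ :=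
  ∫ x in Set.Ioc (0 : ℝ) 1, psi k (B / Real.sqrt x)

open Set

lemma psi_nonneg (m : ℕ) {y : ℝ} (hy : 0 ≤ y) : 0 ≤ psi m y := by
  refine tsum_nonneg fun t => ?_
  split
  · positivity
  · exact le_refl 0

lemma summable_aux (m : ℕ) {y : ℝ} (hy : 0 ≤ y) :
    Summable (fun t : ℕ => if m ≤ t then y ^ t * Real.exp (-y) / t.factorial else 0) := by
  refine Summable.of_nonneg_of_le ?_ ?_
    ((Real.summable_pow_div_factorial y).mul_right (Real.exp (-y)))
  · intro t; split
    · positivity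
    · exact le_refl 0
  · intro t; split
    · rw [div_mul_eq_mul_div]
    · positivity

lemma exp_tsum (y : ℝ) : ∑' t : ℕ, y ^ t / t.factorial = Real.exp y := by
  rw [Real.exp_eq_exp_ℝ, NormedSpace.exp_eq_tsum_div]

lemma psi_eq (m : ℕ) (y : ℝ) :
    psi m y = 1 - Real.exp (-y) * ∑ t ∈ Finset.range m, y ^ t / t.factorial := by
  have hs : Summable (fun t : ℕ => y ^ t * Real.exp (-y) / t.factorial) := by
    have := (Real.summable_pow_div_factorial y).mul_right (Real.exp (-y))
    refine this.congr fun t => by ring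
  have htot : ∑' t : ℕ, y ^ t * Real.exp (-y) / t.factorial = 1 := by
    have : (fun t : ℕ => y ^ t * Real.exp (-y) / t.factorial)
        = fun t : ℕ => (y ^ t / t.factorial) * Real.exp (-y) := funext fun t => by ring
    rw [this, tsum_mul_right, exp_tsum, ← Real.exp_add]
    simp
  have hfin : Summable (fun t : ℕ => if t < m then y ^ t * Real.exp (-y) / t.factorial else 0) :=
    summable_of_ne_finset_zero (s := Finset.range m)
      (fun t ht => by simp [Finset.mem_range] at ht; simp [ht])
  have key : ∀ t : ℕ, (if m ≤ t then y ^ t * Real.exp (-y) / t.factorial else 0)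
      = y ^ t * Real.exp (-y) / t.factorial
        - (if t < m then y ^ t * Real.exp (-y) / t.factorial else 0) := by
    intro t; rcases le_or_gt m t with h | h
    · simp [h, not_lt.mpr h]
    · simp [h, not_le.mpr h]
  rw [psi]
  calc ∑' t : ℕ, (if m ≤ t then y ^ t * Real.exp (-y) / t.factorial else 0)
      = ∑' t : ℕ, (y ^ t * Real.exp (-y) / t.factorial
        - (if t < m then y ^ t * Real.exp (-y) / t.factorial else 0)) := by
        exact tsum_congr key
    _ = 1 - ∑ t ∈ Finset.range m, y ^ t * Real.exp (-y) / t.factorial := by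
        rw [Summable.tsum_sub hs hfin, htot,
          tsum_eq_sum (s := Finset.range m) (fun t ht => by simp [Finset.mem_range] at ht; simp [ht])]
        congr 1
        exact Finset.sum_congr rfl fun t ht => by simp [Finset.mem_range.mp ht]
    _ = 1 - Real.exp (-y) * ∑ t ∈ Finset.range m, y ^ t / t.factorial := by
        rw [Finset.mul_sum]; congr 1; exact Finset.sum_congr rfl fun t _ => by ring

lemma psi_continuous (m : ℕ) : Continuous (psi m) := by
  have : psi m = fun y => 1 - Real.exp (-y) * ∑ t ∈ Finset.range m, y ^ t / t.factorial :=
    funext (psi_eq m)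
  rw [this]; fun_prop

lemma integrable_pow_exp (n : ℕ) :
    IntegrableOn (fun y : ℝ => y ^ n * Real.exp (-y)) (Set.Ioi 0) := by
  have h := Real.GammaIntegral_convergent (s := (n : ℝ) + 1) (by positivity)
  refine (h.congr_fun ?_ measurableSet_Ioi)
  intro x hx
  simp only [add_sub_cancel_right, Real.rpow_natCast]
  ring

lemma integral_pow_exp (n : ℕ) :
    ∫ y in Set.Ioi (0:ℝ), y ^ n * Real.exp (-y) = n.factorial := by
  have h := Real.Gamma_eq_integral (s := (n : ℝ) + 1) (by positivity)
  rw [Real.Gamma_nat_eq_factorial] at h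
  have h2 : ∫ y in Set.Ioi (0:ℝ), y ^ n * Real.exp (-y)
      = ∫ x in Set.Ioi (0:ℝ), Real.exp (-x) * x ^ ((n : ℝ) + 1 - 1) := by
    refine setIntegral_congr_fun measurableSet_Ioi fun x hx => ?_
    simp only [add_sub_cancel_right, Real.rpow_natCast]
    ring
  rw [h2, ← h]

lemma hasSum_c (k : ℕ) (hk : 3 ≤ k) :
    HasSum (fun t : ℕ => if k ≤ t then ((t - 3).factorial : ℝ) / t.factorial else 0)
      (1 / (2 * ((k : ℝ) - 1) * ((k : ℝ) - 2))) := by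
  obtain ⟨j, rfl⟩ : ∃ j, k = j + 3 := ⟨k - 3, by omega⟩
  set c : ℕ → ℝ := fun t => if j + 3 ≤ t then ((t - 3).factorial : ℝ) / t.factorial else 0 with hc
  set G : ℕ → ℝ := fun n => 1 / (2 * ((j : ℝ) + n + 1) * ((j : ℝ) + n + 2)) with hG
  have hstep : ∀ n : ℕ, c (n + (j + 3)) = G n - G (n + 1) := by
    intro n
    have h1 : j + 3 ≤ n + (j + 3) := by omega
    have h2 : n + (j + 3) - 3 = n + j := by omega
    have h3 : (n + (j + 3)).factorial = (n + j + 3) * ((n + j + 2) * ((n + j + 1) * (n + j).factorial)) := by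
      have he : n + (j + 3) = ((n + j) + 1 + 1) + 1 := by omega
      rw [he, Nat.factorial_succ, Nat.factorial_succ, Nat.factorial_succ]
    simp only [hc, hG, if_pos h1, h2, h3]
    have hf : ((n + j).factorial : ℝ) > 0 := by positivity
    push_cast
    rw [div_sub_div _ _ (by positivity) (by positivity), div_eq_div_iff (by positivity) (by positivity)]
    ring
  have hG0 : Tendsto G atTop (nhds 0) := by
    apply squeeze_zero (fun n => by positivity)
      (g := fun n : ℕ => 1 / ((n : ℝ) + 1))
    · intro n
      apply div_le_div_of_nonneg_left one_pos.le (by positivity)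
      nlinarith [Nat.cast_nonneg (α := ℝ) n, Nat.cast_nonneg (α := ℝ) j]
    · exact tendsto_one_div_add_atTop_nhds_zero_nat
  have hps : Tendsto (fun N => ∑ i ∈ Finset.range N, c (i + (j + 3))) atTop (nhds (G 0)) := by
    have : ∀ N, ∑ i ∈ Finset.range N, c (i + (j + 3)) = G 0 - G N := by
      intro N
      rw [Finset.sum_congr rfl fun i _ => hstep i]
      exact Finset.sum_range_sub' G N
    simp only [this]
    simpa using (tendsto_const_nhds (x := G 0)).sub hG0
  have hnn : ∀ t, 0 ≤ c t := by
    intro t; simp only [hc]; split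
    · positivity
    · exact le_refl 0
  have hshift : HasSum (fun n => c (n + (j + 3))) (G 0) :=
    (hasSum_iff_tendsto_nat_of_nonneg (fun i => hnn _) _).mpr hps
  have hfull := (hasSum_nat_add_iff (j + 3)).mp hshift
  have hz : ∑ i ∈ Finset.range (j + 3), c i = 0 := by
    apply Finset.sum_eq_zero
    intro i hi
    rw [Finset.mem_range] at hi
    simp only [hc]
    rw [if_neg (by omega)]
  rw [hz, add_zero] at hfull
  have hval : G 0 = 1 / (2 * (((j : ℕ) + 3 : ℝ) - 1) * (((j : ℕ) + 3 : ℝ) - 2)) := by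
    simp only [hG]
    push_cast
    ring
  rw [hval] at hfull
  exact_mod_cast hfull

lemma hFun_cov (k : ℕ) {B : ℝ} (hB : 0 < B) :
    hFun k B = 2 * B ^ 2 * ∫ y in Set.Ioi B, psi k y / y ^ 3 := by
  have hBne : B ≠ 0 := hB.ne'
  have himg : (fun y : ℝ => B ^ 2 / y ^ 2) '' (Set.Ioi B) = Set.Ioo 0 1 := by
    ext x
    constructor
    · rintro ⟨y, hy, rfl⟩
      rw [Set.mem_Ioi] at hy
      have hy0 : 0 < y := hB.trans hy
      refine ⟨by positivity, ?_⟩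
      rw [div_lt_one (by positivity)]
      nlinarith
    · rintro ⟨hx0, hx1⟩
      have hs0 : 0 < Real.sqrt x := Real.sqrt_pos.mpr hx0
      refine ⟨B / Real.sqrt x, ?_, ?_⟩
      · rw [Set.mem_Ioi]
        have hs1 : Real.sqrt x < 1 := by
          rw [show (1:ℝ) = Real.sqrt 1 by simp]
          exact Real.sqrt_lt_sqrt hx0.le hx1
        rw [lt_div_iff₀ hs0]
        nlinarith
      · have h1 : (B / Real.sqrt x) ^ 2 = B ^ 2 / x := by
          rw [div_pow, Real.sq_sqrt hx0.le]
        simp only [h1]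
        field_simp
  have hderiv : ∀ y ∈ Set.Ioi B, HasDerivWithinAt (fun y : ℝ => B ^ 2 / y ^ 2)
      (-2 * B ^ 2 / y ^ 3) (Set.Ioi B) y := by
    intro y hy
    have hy0 : 0 < y := hB.trans hy
    have h1 : HasDerivAt (fun y : ℝ => y ^ 2) (2 * y) y := by
      simpa using hasDerivAt_pow 2 y
    have h2 := (h1.inv (by positivity)).const_mul (B ^ 2)
    have h4 : (fun y : ℝ => B ^ 2 * (y ^ 2)⁻¹) = fun y : ℝ => B ^ 2 / y ^ 2 := by
      funext z; rw [div_eq_mul_inv]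
    simp only [Pi.inv_apply] at h2
    rw [h4] at h2
    have e : -2 * B ^ 2 / y ^ 3 = B ^ 2 * (-(2 * y) / (y ^ 2) ^ 2) := by
      rw [mul_div_assoc', div_eq_div_iff (by positivity) (by positivity)]
      ring
    rw [e]
    exact h2.hasDerivWithinAt
  have hinj : Set.InjOn (fun y : ℝ => B ^ 2 / y ^ 2) (Set.Ioi B) := by
    intro a ha b hb hab
    simp only at hab
    rw [Set.mem_Ioi] at ha hb
    have ha0 : 0 < a := hB.trans ha
    have hb0 : 0 < b := hB.trans hb
    have h : a ^ 2 = b ^ 2 := by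
      field_simp at hab
      nlinarith [hab]
    nlinarith [sq_nonneg (a - b), sq_nonneg (a + b)]
  have step1 : hFun k B = ∫ x in Set.Ioo (0:ℝ) 1, psi k (B / Real.sqrt x) := by
    rw [hFun, ← Measure.restrict_congr_set Ioo_ae_eq_Ioc]
  have step2 := integral_image_eq_integral_abs_deriv_smul measurableSet_Ioi hderiv hinj
      (fun x => psi k (B / Real.sqrt x))
  rw [himg] at step2
  rw [step1, step2]
  rw [show (2 * B ^ 2 * ∫ y in Set.Ioi B, psi k y / y ^ 3)
      = ∫ y in Set.Ioi B, 2 * B ^ 2 * (psi k y / y ^ 3) from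
    (MeasureTheory.integral_const_mul _ _).symm]
  refine setIntegral_congr_fun measurableSet_Ioi fun y hy => ?_
  rw [Set.mem_Ioi] at hy
  have hy0 : 0 < y := hB.trans hy
  have h1 : Real.sqrt (B ^ 2 / y ^ 2) = B / y := by
    rw [show B ^ 2 / y ^ 2 = (B / y) ^ 2 by rw [div_pow], Real.sqrt_sq (by positivity)]
  have h2 : B / (B / y) = y := by field_simp
  rw [h1, h2, smul_eq_mul, abs_div, abs_of_pos (by positivity : (0:ℝ) < y ^ 3),
    abs_of_neg (by nlinarith : -2 * B ^ 2 < 0)]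
  ring

noncomputable def fAux (k t : ℕ) (y : ℝ) : ℝ :=
  if k ≤ t then y ^ (t - 3) * Real.exp (-y) / t.factorial else 0

noncomputable def cAux (k t : ℕ) : ℝ :=
  if k ≤ t then ((t - 3).factorial : ℝ) / t.factorial else 0

lemma fAux_nonneg (k t : ℕ) {y : ℝ} (hy : 0 ≤ y) : 0 ≤ fAux k t y := by
  rw [fAux]; split
  · positivity
  · exact le_refl 0

lemma cAux_nonneg (k t : ℕ) : 0 ≤ cAux k t := by
  rw [cAux]; split
  · positivity
  · exact le_refl 0

lemma fAux_integrableOn (k t : ℕ) : IntegrableOn (fAux k t) (Set.Ioi 0) := by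
  by_cases h : k ≤ t
  · have : fAux k t = fun y => (t.factorial : ℝ)⁻¹ * (y ^ (t - 3) * Real.exp (-y)) := by
      funext y; rw [fAux, if_pos h]; ring
    rw [this]
    exact (integrable_pow_exp (t - 3)).const_mul _
  · have : fAux k t = fun _ => (0:ℝ) := by funext y; rw [fAux, if_neg h]
    rw [this]
    exact integrableOn_zero

lemma fAux_integral (k t : ℕ) : ∫ y in Set.Ioi (0:ℝ), fAux k t y = cAux k t := by
  by_cases h : k ≤ t
  · have h1 : (fun y => fAux k t y) = fun y => (t.factorial : ℝ)⁻¹ * (y ^ (t - 3) * Real.exp (-y)) := by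
      funext y; rw [fAux, if_pos h]; ring
    rw [h1, MeasureTheory.integral_const_mul, integral_pow_exp, cAux, if_pos h]
    rw [inv_mul_eq_div]
  · have h1 : (fun y => fAux k t y) = fun _ => (0:ℝ) := by funext y; rw [fAux, if_neg h]
    rw [h1, cAux, if_neg h]
    simp

lemma fAux_aesm (k t : ℕ) : AEStronglyMeasurable (fAux k t) (volume.restrict (Set.Ioi 0)) := by
  by_cases h : k ≤ t
  · have : fAux k t = fun y => y ^ (t - 3) * Real.exp (-y) / t.factorial := by
      funext y; rw [fAux, if_pos h]
    rw [this]
    exact (((continuous_pow (t-3)).mul (Real.continuous_exp.comp continuous_neg)).div_const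
      _).aestronglyMeasurable
  · have : fAux k t = fun _ => (0:ℝ) := by funext y; rw [fAux, if_neg h]
    rw [this]; exact aestronglyMeasurable_const

lemma fAux_lintegral (k t : ℕ) :
    ∫⁻ y in Set.Ioi (0:ℝ), ‖fAux k t y‖₊ = ENNReal.ofReal (cAux k t) := by
  have nn : 0 ≤ᵐ[volume.restrict (Set.Ioi 0)] fAux k t := by
    filter_upwards [self_mem_ae_restrict (measurableSet_Ioi : MeasurableSet (Set.Ioi (0:ℝ)))]
      with y hy
    exact fAux_nonneg k t (le_of_lt hy)
  have h1 := MeasureTheory.ofReal_integral_eq_lintegral_ofReal (fAux_integrableOn k t) nn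
  rw [fAux_integral] at h1
  rw [h1]
  apply lintegral_congr_ae
  filter_upwards [nn] with y hy
  exact Real.enorm_eq_ofReal hy

lemma hasSum_fAux (k : ℕ) (hk : 3 ≤ k) {y : ℝ} (hy : 0 < y) :
    HasSum (fun t => fAux k t y) (psi k y / y ^ 3) := by
  have h1 : HasSum (fun t : ℕ => if k ≤ t then y ^ t * Real.exp (-y) / t.factorial else 0)
      (psi k y) := (summable_aux k hy.le).hasSum
  have h2 := h1.div_const (y ^ 3)
  have heq : (fun t : ℕ => (if k ≤ t then y ^ t * Real.exp (-y) / t.factorial else 0) / y ^ 3)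
      = fun t => fAux k t y := by
    funext t
    rw [fAux]
    split
    · rename_i h
      have hyt : y ^ t = y ^ (t - 3) * y ^ 3 := by
        rw [← pow_add]
        congr 1
        omega
      rw [hyt]
      field_simp
    · exact zero_div _
  rwa [heq] at h2

lemma hasSum_cAux (k : ℕ) (hk : 3 ≤ k) :
    HasSum (cAux k) (1 / (2 * ((k : ℝ) - 1) * ((k : ℝ) - 2))) := by
  have h := hasSum_c k hk
  refine h.congr_fun fun t => ?_
  rw [cAux]

lemma tsum_lintegral_fAux (k : ℕ) (hk : 3 ≤ k) :
    ∑' t, ∫⁻ y in Set.Ioi (0:ℝ), ‖fAux k t y‖₊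
      = ENNReal.ofReal (1 / (2 * ((k : ℝ) - 1) * ((k : ℝ) - 2))) := by
  simp only [fAux_lintegral]
  rw [← ENNReal.ofReal_tsum_of_nonneg (cAux_nonneg k) (hasSum_cAux k hk).summable,
    (hasSum_cAux k hk).tsum_eq]

lemma g_aesm (k : ℕ) :
    AEStronglyMeasurable (fun y : ℝ => psi k y / y ^ 3) (volume.restrict (Set.Ioi 0)) :=
  ((psi_continuous k).measurable.div (measurable_id.pow_const 3)).aestronglyMeasurable

lemma g_integral (k : ℕ) (hk : 3 ≤ k) :
    ∫ y in Set.Ioi (0:ℝ), psi k y / y ^ 3 = 1 / (2 * ((k : ℝ) - 1) * ((k : ℝ) - 2)) := by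
  have hne : ∑' t, ∫⁻ y in Set.Ioi (0:ℝ), ‖fAux k t y‖₊ ≠ ⊤ := by
    rw [tsum_lintegral_fAux k hk]
    exact ENNReal.ofReal_ne_top
  have h1 := MeasureTheory.integral_tsum (fAux_aesm k) hne
  have h2 : (fun y : ℝ => psi k y / y ^ 3) =ᵐ[volume.restrict (Set.Ioi 0)]
      (fun y => ∑' t, fAux k t y) := by
    filter_upwards [self_mem_ae_restrict (measurableSet_Ioi : MeasurableSet (Set.Ioi (0:ℝ)))]
      with y hy
    exact ((hasSum_fAux k hk hy).tsum_eq).symm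
  rw [integral_congr_ae h2, h1]
  simp only [fAux_integral]
  exact (hasSum_cAux k hk).tsum_eq

lemma g_integrableOn (k : ℕ) (hk : 3 ≤ k) :
    IntegrableOn (fun y : ℝ => psi k y / y ^ 3) (Set.Ioi 0) := by
  refine ⟨g_aesm k, ?_⟩
  rw [HasFiniteIntegral]
  have h2 : ∀ᵐ y ∂(volume.restrict (Set.Ioi (0:ℝ))),
      ‖psi k y / y ^ 3‖ₑ = ∑' t, ENNReal.ofReal (fAux k t y) := by
    filter_upwards [self_mem_ae_restrict (measurableSet_Ioi : MeasurableSet (Set.Ioi (0:ℝ)))]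
      with y hy
    have hy0 : (0:ℝ) < y := hy
    have hgnn : 0 ≤ psi k y / y ^ 3 := div_nonneg (psi_nonneg k hy0.le) (by positivity)
    rw [Real.enorm_eq_ofReal hgnn, ← (hasSum_fAux k hk hy0).tsum_eq]
    exact ENNReal.ofReal_tsum_of_nonneg (fun t => fAux_nonneg k t hy0.le)
      (hasSum_fAux k hk hy0).summable
  rw [lintegral_congr_ae h2]
  have haem : ∀ t : ℕ, AEMeasurable (fun y => ENNReal.ofReal (fAux k t y))
      (volume.restrict (Set.Ioi (0:ℝ))) := fun t =>
    ENNReal.measurable_ofReal.comp_aemeasurable (fAux_aesm k t).aemeasurable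
  rw [lintegral_tsum haem]
  have hper : ∀ t : ℕ, ∫⁻ y in Set.Ioi (0:ℝ), ENNReal.ofReal (fAux k t y)
      = ENNReal.ofReal (cAux k t) := by
    intro t
    rw [← fAux_lintegral k t]
    apply lintegral_congr_ae
    filter_upwards [self_mem_ae_restrict (measurableSet_Ioi : MeasurableSet (Set.Ioi (0:ℝ)))]
      with y hy
    exact (Real.enorm_eq_ofReal (fAux_nonneg k t (le_of_lt hy))).symm
  simp only [hper]
  rw [← ENNReal.ofReal_tsum_of_nonneg (cAux_nonneg k) (hasSum_cAux k hk).summable]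
  exact ENNReal.ofReal_lt_top

theorem hFun_limit (k : ℕ) (hk : 3 ≤ k) :
    Tendsto (fun B : ℝ => hFun k B / (2 * B ^ 2)) (nhdsWithin 0 (Set.Ioi 0))
      (nhds (1 / (2 * ((k : ℝ) - 1) * ((k : ℝ) - 2)))) := by
  set L : ℝ := 1 / (2 * ((k : ℝ) - 1) * ((k : ℝ) - 2)) with hL
  have g_int := g_integrableOn k hk
  set g : ℝ → ℝ := fun y => psi k y / y ^ 3 with hg
  -- Step B : the tail integral tends to 0
  have stepB : Tendsto (fun B : ℝ => ∫ y in Set.Ioc (0:ℝ) B, g y)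
      (nhdsWithin 0 (Set.Ioi 0)) (nhds 0) := by
    have key : Tendsto (fun B : ℝ => ∫ y in Set.Ioi (0:ℝ), Set.indicator (Set.Ioc 0 B) g y)
        (nhdsWithin 0 (Set.Ioi 0)) (nhds (∫ y in Set.Ioi (0:ℝ), (0:ℝ))) := by
      apply MeasureTheory.tendsto_integral_filter_of_dominated_convergence
        (bound := fun y => |g y|)
      · exact Eventually.of_forall fun B => (g_aesm k).indicator measurableSet_Ioc
      · refine Eventually.of_forall fun B => Eventually.of_forall fun y => ?_
        by_cases hm : y ∈ Set.Ioc (0:ℝ) B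
        · rw [Set.indicator_of_mem hm, Real.norm_eq_abs]
        · rw [Set.indicator_of_notMem hm]
          simp
      · exact (g_integrableOn k hk).abs
      · filter_upwards [self_mem_ae_restrict
          (measurableSet_Ioi : MeasurableSet (Set.Ioi (0:ℝ)))] with y hy
        have hy0 : (0:ℝ) < y := hy
        have hev : ∀ᶠ B in nhdsWithin (0:ℝ) (Set.Ioi 0),
            Set.indicator (Set.Ioc 0 B) g y = 0 := by
          have : ∀ᶠ B in nhdsWithin (0:ℝ) (Set.Ioi 0), B < y :=
            eventually_nhdsWithin_of_eventually_nhds ((tendsto_id.eventually_lt_const hy0))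
          filter_upwards [this] with B hB
          apply Set.indicator_of_notMem
          intro hmem
          exact absurd hmem.2 (not_le.mpr hB)
        exact Tendsto.congr' (hev.mono fun B h => h.symm) tendsto_const_nhds
    rw [MeasureTheory.integral_zero] at key
    convert key using 2 with B
    rw [MeasureTheory.integral_indicator measurableSet_Ioc,
      Measure.restrict_restrict measurableSet_Ioc,
      Set.inter_eq_left.mpr Set.Ioc_subset_Ioi_self]
  -- Step A : eventual equality
  have stepA : ∀ᶠ B in nhdsWithin (0:ℝ) (Set.Ioi 0),
      hFun k B / (2 * B ^ 2) = L - ∫ y in Set.Ioc (0:ℝ) B, g y := by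
    filter_upwards [self_mem_nhdsWithin] with B hB
    have hB0 : (0:ℝ) < B := hB
    have hsplit : (∫ y in Set.Ioi (0:ℝ), g y)
        = (∫ y in Set.Ioc (0:ℝ) B, g y) + ∫ y in Set.Ioi B, g y := by
      rw [← MeasureTheory.setIntegral_union (Set.Ioc_disjoint_Ioi le_rfl) measurableSet_Ioi
        (g_int.mono_set Set.Ioc_subset_Ioi_self)
        (g_int.mono_set (Set.Ioi_subset_Ioi hB0.le)),
        Set.Ioc_union_Ioi_eq_Ioi hB0.le]
    have hL' : (∫ y in Set.Ioi (0:ℝ), g y) = L := by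
      rw [hL, hg]; exact g_integral k hk
    have hF : (∫ y in Set.Ioi B, g y) = L - ∫ y in Set.Ioc (0:ℝ) B, g y := by
      rw [← hL', hsplit]; ring
    rw [hFun_cov k hB0, ← hF, hg]
    field_simp
  -- combine
  have final : Tendsto (fun B : ℝ => L - ∫ y in Set.Ioc (0:ℝ) B, g y)
      (nhdsWithin 0 (Set.Ioi 0)) (nhds L) := by
    have := (tendsto_const_nhds (x := L) (f := nhdsWithin (0:ℝ) (Set.Ioi 0))).sub stepB
    simpa using this
  exact Tendsto.congr' (stepA.mono fun B h => h.symm) final
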